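/- Let λ ≥ ℵ₁ be a cardinal. Suppose the following holds: for every cardinal λ' ≤ λ and every family (A^i_δ) indexed by i < λ' and limit ordinals δ < ω₁, where each A^i_δ is a cofinal subset of δ of order type ω, there is a club C ⊆ ω₁ such that A^i_δ ⊄ C for all i < λ' and all limit δ < ω₁. Then 2^{ℵ₀} > λ. -/

import Mathlib

open Ordinal Cardinal

/-- The order type of a set of ordinals: the ordinal isomorphic to `(A, <)`. -/
noncomputable def orderType (A : Set Ordinal) : Ordinal :=
  Ordinal.type ((· < ·) : A → A → Prop)

/-- `C` is a club in `ω₁`: a set of countable ordinals, unbounded in `ω₁`, and closed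
(for every limit `δ < ω₁`, if `C ∩ δ` is unbounded in `δ` then `δ ∈ C`). -/
def IsClub' (C : Set Ordinal) : Prop :=
  C ⊆ Set.Iio ω₁ ∧
  (∀ α < ω₁, ∃ β ∈ C, α < β) ∧
  ∀ δ < ω₁, Order.IsSuccLimit δ → (∀ α < δ, ∃ β ∈ C, α < β ∧ β < δ) → δ ∈ C

/-- `A` is a cofinal subset of `δ` of order type `ω`. -/
def IsLadderAt (δ : Ordinal) (A : Set Ordinal) : Prop :=
  A ⊆ Set.Iio δ ∧ sSup A = δ ∧ orderType A = Ordinal.omega0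

universe u v

lemma card_le_aleph0_of_lt_omega1 {δ : Ordinal.{u}} (hδ : δ < ω₁) : δ.card ≤ ℵ₀ := by
  rw [← ord_aleph] at hδ
  have h := Cardinal.lt_ord.1 hδ
  have h1 : (ℵ_ 1 : Cardinal.{u}) = Order.succ ℵ₀ := by
    rw [show (1 : Ordinal) = Order.succ 0 from (Ordinal.succ_zero).symm, aleph_succ, aleph_zero]
  rw [h1, Order.lt_succ_iff] at h
  exact h

lemma countable_Iio_of_lt_omega1 {δ : Ordinal.{u}} (hδ : δ < ω₁) : Countable (Set.Iio δ) := by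
  rw [← Cardinal.mk_le_aleph0_iff, Ordinal.mk_Iio_ordinal, ← Cardinal.lift_aleph0.{u+1, u},
    Cardinal.lift_le]
  exact card_le_aleph0_of_lt_omega1 hδ

lemma orderType_range {f : ℕ → Ordinal.{u}} (hf : StrictMono f) :
    orderType (Set.range f) = Ordinal.omega0 := by
  have e : ((· < ·) : ℕ → ℕ → Prop) ≃r ((· < ·) : (Set.range f) → (Set.range f) → Prop) :=
    (hf.orderIso f).toRelIsoLT
  have h := (Ordinal.lift_type_eq.{0, u+1, u+1}).2 ⟨e⟩
  rw [Ordinal.type_nat_lt, Ordinal.lift_omega0, Ordinal.lift_id] at h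
  exact h.symm

lemma isLadderAt_range {f : ℕ → Ordinal.{u}} (hf : StrictMono f) :
    IsLadderAt (⨆ n, f n) (Set.range f) ∧ Order.IsSuccLimit (⨆ n, f n) := by
  have hlt : ∀ n, f n < ⨆ n, f n := fun n =>
    lt_of_lt_of_le (hf (Nat.lt_succ_self n)) (Ordinal.le_iSup f (n + 1))
  have hsup : sSup (Set.range f) = ⨆ n, f n := rfl
  refine ⟨⟨?_, hsup, orderType_range hf⟩, Ordinal.isSuccLimit_iff.2 ⟨?_, Order.isSuccPrelimit_of_succ_lt ?_⟩⟩
  · rintro x ⟨n, rfl⟩; exact hlt n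
  · exact fun h0 => (h0 ▸ hlt 0).not_ge zero_le
  · intro a ha
    obtain ⟨n, hn⟩ := Ordinal.lt_iSup_iff.1 ha
    exact lt_of_le_of_lt (Order.succ_le_of_lt hn) ((hf (Nat.lt_succ_self n)).trans_le
      (Ordinal.le_iSup f (n + 1)))

lemma exists_ladder {δ : Ordinal.{u}} (hδ1 : δ < ω₁) (hδ2 : Order.IsSuccLimit δ) :
    ∃ A : Set Ordinal.{u}, IsLadderAt δ A := by
  have : Countable (Set.Iio δ) := countable_Iio_of_lt_omega1 hδ1
  have : Nonempty (Set.Iio δ) := ⟨⟨0, hδ2.pos⟩⟩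
  obtain ⟨g, hg⟩ := exists_surjective_nat (Set.Iio δ)
  set f : ℕ → Ordinal.{u} := fun n => Nat.rec (motive := fun _ => Ordinal.{u}) (g 0 : Ordinal)
    (fun n ih => max (g (n+1) : Ordinal) ih + 1) n with hfdef
  have hfd : ∀ n, f n < δ := by
    intro n; induction n with
    | zero => exact (g 0).2
    | succ n ih =>
      show max (g (n+1) : Ordinal) (f n) + 1 < δ
      rw [Ordinal.add_one_eq_succ]
      exact hδ2.succ_lt (max_lt (g (n+1)).2 ih)
  have hmono : StrictMono f := by
    apply strictMono_nat_of_lt_succ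
    intro n
    show f n < max (g (n+1) : Ordinal) (f n) + 1
    rw [Ordinal.add_one_eq_succ]
    exact (le_max_right _ _).trans_lt (Order.lt_succ _)
  have hge : ∀ n, (g n : Ordinal) ≤ f n := by
    intro n; cases n with
    | zero => exact le_rfl
    | succ n =>
      show (g (n+1) : Ordinal) ≤ max (g (n+1) : Ordinal) (f n) + 1
      rw [Ordinal.add_one_eq_succ]
      exact (le_max_left _ _).trans (Order.le_succ _)
  have hde : δ = ⨆ n, f n := by
    apply le_antisymm
    · apply le_of_forall_lt
      intro α hα
      obtain ⟨n, hn⟩ := hg ⟨α, hα⟩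
      have : α ≤ f n := by have h2 := hge n; rw [hn] at h2; exact h2
      exact this.trans_lt ((hmono (Nat.lt_succ_self n)).trans_le (Ordinal.le_iSup f (n+1)))
    · exact Ordinal.iSup_le fun n => (hfd n).le
  exact ⟨Set.range f, hde ▸ (isLadderAt_range hmono).1⟩

lemma mk_ladders_le {δ : Ordinal.{u}} (hδ : δ < ω₁) :
    #{A : Set Ordinal.{u} // IsLadderAt δ A} ≤ Cardinal.lift.{u+1, u} Cardinal.continuum.{u} := by
  have hinj : Function.Injective
      (fun A : {A : Set Ordinal.{u} // IsLadderAt δ A} =>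
        ({x : Set.Iio δ | (x : Ordinal) ∈ A.1} : Set (Set.Iio δ))) := by
    rintro ⟨A, hA⟩ ⟨B, hB⟩ h
    simp only [Subtype.mk.injEq]
    simp only [Set.ext_iff, Set.mem_setOf_eq, Subtype.forall] at h
    ext x
    constructor
    · intro hx; exact (h x (hA.1 hx)).1 hx
    · intro hx; exact (h x (hB.1 hx)).2 hx
  calc #{A : Set Ordinal.{u} // IsLadderAt δ A}
      ≤ #(Set (Set.Iio δ)) := Cardinal.mk_le_of_injective hinj
    _ = 2 ^ #(Set.Iio δ) := Cardinal.mk_set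
    _ = 2 ^ Cardinal.lift.{u+1, u} δ.card := by rw [Ordinal.mk_Iio_ordinal]
    _ ≤ 2 ^ Cardinal.lift.{u+1, u} ℵ₀ := by
        apply Cardinal.power_le_power_left two_ne_zero
        exact Cardinal.lift_le.2 (card_le_aleph0_of_lt_omega1 hδ)
    _ = Cardinal.lift.{u+1, u} Cardinal.continuum.{u} := by
        rw [Cardinal.lift_aleph0, Cardinal.two_power_aleph0, Cardinal.lift_continuum]

lemma exists_family : ∃ A : Ordinal.{v} → Ordinal.{u} → Set Ordinal.{u},
    (∀ i < Cardinal.continuum.{v}.ord, ∀ δ < ω₁, Order.IsSuccLimit δ → IsLadderAt δ (A i δ)) ∧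
    (∀ δ < ω₁, Order.IsSuccLimit δ → ∀ B : Set Ordinal.{u}, IsLadderAt δ B →
      ∃ i < Cardinal.continuum.{v}.ord, A i δ = B) := by
  have key : ∀ δ : Ordinal.{u}, ∃ F : Ordinal.{v} → Set Ordinal.{u},
      δ < ω₁ → Order.IsSuccLimit δ →
      (∀ i < Cardinal.continuum.{v}.ord, IsLadderAt δ (F i)) ∧
      (∀ B, IsLadderAt δ B → ∃ i < Cardinal.continuum.{v}.ord, F i = B) := by
    intro δ
    by_cases hδ1 : δ < ω₁
    · by_cases hδ2 : Order.IsSuccLimit δ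
      · have hne : Nonempty {A : Set Ordinal.{u} // IsLadderAt δ A} := by
          obtain ⟨A, hA⟩ := exists_ladder hδ1 hδ2
          exact ⟨⟨A, hA⟩⟩
        have e1 : Cardinal.lift.{v+1} #{A : Set Ordinal.{u} // IsLadderAt δ A}
            ≤ Cardinal.lift.{v+1} (Cardinal.lift.{u+1, u} Cardinal.continuum.{u}) :=
          Cardinal.lift_le.2 (mk_ladders_le hδ1)
        have e2 : Cardinal.lift.{v+1} (Cardinal.lift.{u+1, u} Cardinal.continuum.{u})
            = Cardinal.lift.{u+1} #(Set.Iio Cardinal.continuum.{v}.ord) := by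
          rw [Ordinal.mk_Iio_ordinal, Cardinal.card_ord, Cardinal.lift_lift,
            Cardinal.lift_lift, Cardinal.lift_continuum, Cardinal.lift_continuum]
        rw [e2] at e1
        obtain ⟨j⟩ := Cardinal.lift_mk_le'.1 e1
        have hsurj := Function.invFun_surjective j.injective
        refine ⟨fun i => if h : i < Cardinal.continuum.{v}.ord then
          (Function.invFun j ⟨i, h⟩ : {A : Set Ordinal.{u} // IsLadderAt δ A}).1 else ∅,
          fun _ _ => ⟨?_, ?_⟩⟩
        · intro i hi
          simp only [dif_pos hi]
          exact (Function.invFun j ⟨i, hi⟩).2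
        · intro B hB
          obtain ⟨x, hx⟩ := hsurj ⟨B, hB⟩
          refine ⟨x.1, x.2, ?_⟩
          simp only [Subtype.coe_eta, hx]
          exact dif_pos x.2
      · exact ⟨fun _ => ∅, fun _ h => absurd h hδ2⟩
    · exact ⟨fun _ => ∅, fun h => absurd h hδ1⟩
  choose F hF using key
  exact ⟨fun i δ => F δ i,
    fun i hi δ hδ hlim => (hF δ hδ hlim).1 i hi,
    fun δ hδ hlim B hB => (hF δ hδ hlim).2 B hB⟩

/-- If for every cardinal `λ' ≤ λ` (with `λ ≥ ℵ₁`) and every family `(A i δ)`, indexed by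
`i < λ'` and limit `δ < ω₁`, of cofinal subsets of `δ` of order type `ω`, there is a club
`C ⊆ ω₁` with `A i δ ⊄ C` for all such `i, δ`, then `2^{ℵ₀} > λ`. -/
theorem stmt0 (lam : Cardinal) (hlam : Cardinal.aleph 1 ≤ lam)
    (H : ∀ lam' ≤ lam, ∀ A : Ordinal → Ordinal → Set Ordinal,
      (∀ i < lam'.ord, ∀ δ < ω₁, Order.IsSuccLimit δ → IsLadderAt δ (A i δ)) →
      ∃ C : Set Ordinal, IsClub' C ∧
        ∀ i < lam'.ord, ∀ δ < ω₁, Order.IsSuccLimit δ → ¬ A i δ ⊆ C) :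
    lam < Cardinal.continuum := by
  by_contra hcon
  have hcont : Cardinal.continuum ≤ lam := not_lt.1 hcon
  obtain ⟨A, hA1, hA2⟩ := exists_family
  obtain ⟨C, ⟨hC1, hC2, _⟩, hnot⟩ := H Cardinal.continuum hcont A hA1
  -- build a strictly increasing sequence in C
  have hnext : ∀ α : Ordinal, α < ω₁ → ∃ β, β ∈ C ∧ α < β := by
    intro α hα
    obtain ⟨β, hβC, hβ⟩ := hC2 α hα
    exact ⟨β, hβC, hβ⟩
  classical
  let g : Ordinal → Ordinal := fun α => if h : α < ω₁ then (hnext α h).choose else 0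
  have hg : ∀ α, α < ω₁ → g α ∈ C ∧ α < g α := by
    intro α h
    simp only [g, dif_pos h]
    exact (hnext α h).choose_spec
  let f : ℕ → Ordinal := fun n => Nat.rec (motive := fun _ => Ordinal) (g 0) (fun _ ih => g ih) n
  have h0 : (0 : Ordinal) < ω₁ := omega_pos 1
  have hfC : ∀ n, f n ∈ C ∧ f n < ω₁ := by
    intro n; induction n with
    | zero => exact ⟨(hg 0 h0).1, hC1 (hg 0 h0).1⟩
    | succ n ih =>
      have := hg (f n) ih.2
      exact ⟨this.1, hC1 this.1⟩
  have hmono : StrictMono f := by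
    apply strictMono_nat_of_lt_succ
    intro n
    exact (hg (f n) (hfC n).2).2
  obtain ⟨hlad, hlim⟩ := isLadderAt_range hmono
  have hδω : (⨆ n, f n) < ω₁ := by
    exact Ordinal.iSup_lt_omega_one (fun n => (hfC n).2)
  obtain ⟨i, hi, hAB⟩ := hA2 (⨆ n, f n) hδω hlim (Set.range f) hlad
  apply hnot i hi (⨆ n, f n) hδω hlim
  rw [hAB]
  rintro x ⟨n, rfl⟩
  exact (hfC n).1
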